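/- Given complex p×p matrices α_0, α_1, …, α_N, define Π = [Φ₁ Φ₂] with Φ₁ the column of identity blocks and Φ₂ the column of partial sums α_0 + … + α_k, and define A as the block lower triangular Toeplitz matrix with diagonal blocks (i/2)I_p and lower blocks iI_p. Then the block Toeplitz matrix S = {s_{j-k}}_{k,j=0}^N with s_{-k} = α_k = s_k* for k > 0 and s_0 = α_0 + α_0* satisfies the identity A S - S A* = i Π J Π*, where J = [[0,I_p],[I_p,0]], and S is the unique solution of this identity. -/

import Mathlib

open Matrix Finset

private lemma core_u18 (a : ℕ → ℂ) (k l : ℕ) :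
    (if l ≤ k then a (k - l) else 0)
      + (∑ m ∈ range k, if l ≤ m then a (m - l) else 0)
      + (∑ m ∈ range l, if m ≤ k then a (k - m) else 0)
    = ∑ r ∈ range (k + 1), a r := by
  have h1 : (∑ m ∈ range (k+1), if l ≤ m then a (m - l) else 0)
      = ∑ r ∈ range (k + 1 - l), a r := by
    rw [← Finset.sum_filter]
    have : (range (k+1)).filter (fun m => l ≤ m) = Ico l (k+1) := by
      ext m; simp; omega
    rw [this, Finset.sum_Ico_eq_sum_range]
    exact Finset.sum_congr rfl (fun m hm => by congr 1; omega)
  have h2 : (∑ m ∈ range l, if m ≤ k then a (k - m) else 0)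
      = ∑ r ∈ Ico (k + 1 - l) (k + 1), a r := by
    rw [← Finset.sum_filter]
    have hf : (range l).filter (fun m => m ≤ k) = range (min l (k+1)) := by
      ext m; simp
    rw [hf, Finset.sum_Ico_eq_sum_range]
    have hM : k + 1 - (k + 1 - l) = min l (k+1) := by omega
    rw [hM]
    rw [← Finset.sum_range_reflect (fun i => a (k + 1 - l + i)) (min l (k+1))]
    exact Finset.sum_congr rfl (fun m hm => by
      simp only [mem_range] at hm; congr 1; omega)
  have comb : (if l ≤ k then a (k - l) else 0)
      + (∑ m ∈ range k, if l ≤ m then a (m - l) else 0)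
      = ∑ m ∈ range (k+1), if l ≤ m then a (m - l) else 0 := by
    rw [Finset.sum_range_succ]; ring
  rw [comb, h1, h2, Finset.sum_range_add_sum_Ico a (by omega : k + 1 - l ≤ k + 1)]

private lemma split_sum18 (n K : ℕ) (hK : K < n) (A B : ℕ → ℂ) :
    (∑ x ∈ range n, if K = x then A x else if x < K then B x else 0)
    = A K + ∑ x ∈ range K, B x := by
  have : ∀ x, (if K = x then A x else if x < K then B x else 0)
      = (if K = x then A x else 0) + (if x < K then B x else 0) := by
    intro x; split_ifs with h1 h2 <;> simp_all
  simp_rw [this]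
  rw [Finset.sum_add_distrib, Finset.sum_ite_eq (range n) K A]
  simp only [Finset.mem_range, hK, if_true]
  congr 1
  rw [← Finset.sum_filter]
  congr 1
  ext m; simp; omega

private lemma entry_lemma18 (p N : ℕ)
    (α : ℕ → Matrix (Fin p) (Fin p) ℂ)
    (k l : Fin (N+1)) (i j : Fin p) :
    (∑ x : Fin (N + 1),
        ∑ x_1 : Fin p,
          (if k = x then Complex.I / 2 * if i = x_1 then 1 else 0
            else if x < k then Complex.I * if i = x_1 then 1 else 0 else 0) *
            (if x = l then α 0 x_1 j + star (α 0 j x_1)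
            else if (l:ℕ) < (x:ℕ) then α ((x:ℕ) - (l:ℕ)) x_1 j else star (α ((l:ℕ) - (x:ℕ)) j x_1))) -
      ∑ x : Fin (N + 1),
        ∑ x_1 : Fin p,
          (if k = x then α 0 i x_1 + star (α 0 x_1 i)
            else if (x:ℕ) < (k:ℕ) then α ((k:ℕ) - (x:ℕ)) i x_1 else star (α ((x:ℕ) - (k:ℕ)) x_1 i)) *
            star
              (if l = x then Complex.I / 2 * if j = x_1 then 1 else 0
              else if x < l then Complex.I * if j = x_1 then 1 else 0 else 0) =
    Complex.I *
      (∑ x : Fin p, (if i = x then 1 else 0) * star ((∑ r ∈ Finset.range ((l:ℕ) + 1), α r) j x) +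
        ∑ x : Fin p, (∑ r ∈ Finset.range ((k:ℕ) + 1), α r) i x * star (if j = x then 1 else 0)) := by
  simp only [Complex.star_def, apply_ite (starRingEnd ℂ), map_zero, _root_.map_one, map_div₀,
    _root_.map_mul, Complex.conj_I, Complex.conj_ofNat, ite_mul, mul_ite, mul_zero, mul_one,
    zero_mul, one_mul, Finset.sum_ite_irrel, Finset.sum_const_zero, Finset.sum_ite_eq,
    Finset.sum_ite_eq', Finset.mem_univ, if_true]
  set a : ℕ → ℂ := fun r => α r i j with ha
  set b : ℕ → ℂ := fun r => (starRingEnd ℂ) (α r j i) with hb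
  set f : ℕ → ℕ → ℂ := fun m n =>
    if m = n then a 0 + b 0 else if n < m then a (m - n) else b (n - m) with hf
  have e1 : ∀ x : Fin (N+1),
      (if x = l then
          if k = x then Complex.I / 2 * (α 0 i j + (starRingEnd ℂ) (α 0 j i))
          else if x < k then Complex.I * (α 0 i j + (starRingEnd ℂ) (α 0 j i)) else 0
        else
          if (l:ℕ) < (x:ℕ) then
            if k = x then Complex.I / 2 * α ((x:ℕ) - (l:ℕ)) i j
            else if x < k then Complex.I * α ((x:ℕ) - (l:ℕ)) i j else 0
          else
            if k = x then Complex.I / 2 * (starRingEnd ℂ) (α ((l:ℕ) - (x:ℕ)) j i)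
            else if x < k then Complex.I * (starRingEnd ℂ) (α ((l:ℕ) - (x:ℕ)) j i) else 0)
      = (if (k:ℕ) = (x:ℕ) then Complex.I / 2 * f (x:ℕ) (l:ℕ)
          else if (x:ℕ) < (k:ℕ) then Complex.I * f (x:ℕ) (l:ℕ) else 0) := by
    intro x
    simp only [hf, Fin.ext_iff, Fin.lt_def]
    split_ifs <;> first | rfl | omega
  have e2 : ∀ x : Fin (N+1),
      (if l = x then
          if k = x then (α 0 i j + (starRingEnd ℂ) (α 0 j i)) * (-Complex.I / 2)
          else
            if (x:ℕ) < (k:ℕ) then α ((k:ℕ) - (x:ℕ)) i j * (-Complex.I / 2)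
            else (starRingEnd ℂ) (α ((x:ℕ) - (k:ℕ)) j i) * (-Complex.I / 2)
        else
          if x < l then
            if k = x then (α 0 i j + (starRingEnd ℂ) (α 0 j i)) * -Complex.I
            else if (x:ℕ) < (k:ℕ) then α ((k:ℕ) - (x:ℕ)) i j * -Complex.I
            else (starRingEnd ℂ) (α ((x:ℕ) - (k:ℕ)) j i) * -Complex.I
          else 0)
      = (if (l:ℕ) = (x:ℕ) then f (k:ℕ) (x:ℕ) * (-Complex.I / 2)
          else if (x:ℕ) < (l:ℕ) then f (k:ℕ) (x:ℕ) * (-Complex.I) else 0) := by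
    intro x
    simp only [hf, Fin.ext_iff, Fin.lt_def]
    split_ifs <;> first | rfl | omega
  rw [Finset.sum_congr rfl (fun x _ => e1 x), Finset.sum_congr rfl (fun x _ => e2 x)]
  rw [Fin.sum_univ_eq_sum_range (fun x => if (k:ℕ) = x then Complex.I / 2 * f x (l:ℕ)
      else if x < (k:ℕ) then Complex.I * f x (l:ℕ) else 0) (N+1)]
  rw [Fin.sum_univ_eq_sum_range (fun x => if (l:ℕ) = x then f (k:ℕ) x * (-Complex.I / 2)
      else if x < (l:ℕ) then f (k:ℕ) x * (-Complex.I) else 0) (N+1)]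
  rw [split_sum18 (N+1) (k:ℕ) k.isLt _ _, split_sum18 (N+1) (l:ℕ) l.isLt _ _]
  set u : ℕ → ℕ → ℂ := fun m n => if n ≤ m then a (m - n) else 0 with hu
  set v : ℕ → ℕ → ℂ := fun m n => if m ≤ n then b (n - m) else 0 with hv
  have hfs : ∀ m n, f m n = u m n + v m n := by
    intro m n
    simp only [hf, hu, hv]
    rcases lt_trichotomy m n with h | h | h
    · rw [if_neg (by omega), if_neg (by omega), if_neg (by omega), if_pos (by omega)]
      rw [zero_add]
    · subst h
      rw [if_pos rfl, if_pos le_rfl, if_pos le_rfl, Nat.sub_self]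
    · rw [if_neg (by omega), if_pos h, if_pos (by omega), if_neg (by omega), add_zero]
  simp only [hfs]
  simp_rw [mul_add, add_mul]
  rw [Finset.sum_add_distrib, Finset.sum_add_distrib]
  simp_rw [← Finset.mul_sum, ← Finset.sum_mul]
  have c1 := core_u18 a (k:ℕ) (l:ℕ)
  have c2 := core_u18 b (l:ℕ) (k:ℕ)
  simp only [hu, hv] at *
  have hstar : (starRingEnd ℂ) ((∑ r ∈ Finset.range ((l:ℕ) + 1), α r) j i)
      = ∑ r ∈ Finset.range ((l:ℕ) + 1), b r := by
    simp [hb, Matrix.sum_apply, map_sum]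
  have hsum : (∑ r ∈ Finset.range ((k:ℕ) + 1), α r) i j
      = ∑ r ∈ Finset.range ((k:ℕ) + 1), a r := by
    simp [ha, Matrix.sum_apply]
  rw [hstar, hsum]
  linear_combination Complex.I * c1 + Complex.I * c2

private lemma lower_nilp18 {p N : ℕ} (M : Matrix (Fin (N+1) × Fin p) (Fin (N+1) × Fin p) ℂ)
    (hM : ∀ x y : Fin (N+1) × Fin p, ¬ ((y.1 : ℕ) < (x.1 : ℕ)) → M x y = 0) :
    M ^ (N + 1) = 0 := by
  have key : ∀ t, ∀ x y : Fin (N+1) × Fin p, (x.1 : ℕ) < (y.1 : ℕ) + t → (M ^ t) x y = 0 := by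
    intro t
    induction t with
    | zero =>
      intro x y h
      rw [pow_zero]
      exact Matrix.one_apply_ne (by intro hxy; subst hxy; omega)
    | succ t ih =>
      intro x y h
      rw [pow_succ', Matrix.mul_apply]
      apply Finset.sum_eq_zero
      intro z _
      by_cases hz : (z.1 : ℕ) < (x.1 : ℕ)
      · rw [ih z y (by omega), mul_zero]
      · rw [hM x z hz, zero_mul]
  ext x y
  rw [Matrix.zero_apply]
  exact key (N+1) x y (by omega)

private lemma upper_nilp18 {p N : ℕ} (M : Matrix (Fin (N+1) × Fin p) (Fin (N+1) × Fin p) ℂ)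
    (hM : ∀ x y : Fin (N+1) × Fin p, ¬ ((x.1 : ℕ) < (y.1 : ℕ)) → M x y = 0) :
    M ^ (N + 1) = 0 := by
  have h := lower_nilp18 Mᵀ (fun x y hn => hM y x hn)
  have := congrArg Matrix.transpose h
  rwa [← Matrix.transpose_pow, Matrix.transpose_transpose, Matrix.transpose_zero] at this

private lemma smul_one_unit18 {n : Type*} [Fintype n] [DecidableEq n] (c : ℂ) (hc : c ≠ 0) :
    IsUnit (c • (1 : Matrix n n ℂ)) := by
  refine isUnit_iff_exists.2 ⟨c⁻¹ • 1, ?_, ?_⟩ <;>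
    simp [Matrix.smul_mul, Matrix.mul_smul, smul_smul, mul_inv_cancel₀ hc, inv_mul_cancel₀ hc]

theorem stmt18 (p N : ℕ) (hp : 1 ≤ p)
    (α : ℕ → Matrix (Fin p) (Fin p) ℂ)
    (A : Matrix (Fin (N + 1) × Fin p) (Fin (N + 1) × Fin p) ℂ)
    (hA : A = fun ki lj =>
      if ki.1 = lj.1 then (Complex.I / 2) * (if ki.2 = lj.2 then 1 else 0)
      else if lj.1 < ki.1 then Complex.I * (if ki.2 = lj.2 then 1 else 0) else 0)
    (Φ₁ Φ₂ : Matrix (Fin (N + 1) × Fin p) (Fin p) ℂ)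
    (hΦ₁ : Φ₁ = fun ki j => if ki.2 = j then 1 else 0)
    (hΦ₂ : Φ₂ = fun ki j => (∑ r ∈ Finset.range ((ki.1 : ℕ) + 1), α r) ki.2 j)
    (Pi : Matrix (Fin (N + 1) × Fin p) (Fin p ⊕ Fin p) ℂ)
    (hPi : Pi = Matrix.fromCols Φ₁ Φ₂)
    (J : Matrix (Fin p ⊕ Fin p) (Fin p ⊕ Fin p) ℂ)
    (hJ : J = Matrix.fromBlocks 0 1 1 0)
    (S : Matrix (Fin (N + 1) × Fin p) (Fin (N + 1) × Fin p) ℂ)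
    (hS : S = fun ki lj =>
      if ki.1 = lj.1 then (α 0 + (α 0)ᴴ) ki.2 lj.2
      else if (lj.1 : ℕ) < (ki.1 : ℕ) then α ((ki.1 : ℕ) - (lj.1 : ℕ)) ki.2 lj.2
      else (α ((lj.1 : ℕ) - (ki.1 : ℕ)))ᴴ ki.2 lj.2) :
    A * S - S * Aᴴ = Complex.I • (Pi * J * Piᴴ) ∧
    ∀ S' : Matrix (Fin (N + 1) × Fin p) (Fin (N + 1) × Fin p) ℂ,
      A * S' - S' * Aᴴ = Complex.I • (Pi * J * Piᴴ) → S' = S := by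
  have hPJP : Pi * J * Piᴴ = Φ₁ * Φ₂ᴴ + Φ₂ * Φ₁ᴴ := by
    rw [hPi, hJ, fromCols_mul_fromBlocks,
      conjTranspose_fromCols_eq_fromRows_conjTranspose, fromCols_mul_fromRows]
    simp [add_comm]
  have hmain : A * S - S * Aᴴ = Complex.I • (Pi * J * Piᴴ) := by
    rw [hPJP]
    ext ⟨k, i⟩ ⟨l, j⟩
    simp only [Matrix.sub_apply, Matrix.smul_apply, Matrix.add_apply, mul_apply, conjTranspose_apply,
      Fintype.sum_prod_type, smul_eq_mul]
    subst hA hS hΦ₁ hΦ₂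
    exact entry_lemma18 p N α k l i j
  refine ⟨hmain, fun S' hS' => ?_⟩
  have h2 : A * S' - S' * Aᴴ = A * S - S * Aᴴ := hS'.trans hmain.symm
  have hD : A * (S' - S) = (S' - S) * Aᴴ := by
    rw [Matrix.mul_sub, Matrix.sub_mul]
    have h3 : A * S' - A * S - (S' * Aᴴ - S * Aᴴ)
        = A * S' - S' * Aᴴ - (A * S - S * Aᴴ) := by abel
    have h4 : A * S' - A * S - (S' * Aᴴ - S * Aᴴ) = 0 := by rw [h3, h2, sub_self]
    exact sub_eq_zero.mp h4
  set M : Matrix (Fin (N+1) × Fin p) (Fin (N+1) × Fin p) ℂ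
    := A - (Complex.I/2) • 1 with hM
  set C : Matrix (Fin (N+1) × Fin p) (Fin (N+1) × Fin p) ℂ
    := Aᴴ - (Complex.I/2) • 1 with hC
  have hMD : M * (S' - S) = (S' - S) * C := by
    rw [hM, hC, Matrix.mul_sub (S' - S), Matrix.sub_mul, Matrix.smul_mul, Matrix.mul_smul,
      one_mul, mul_one, hD]
  have hpow : ∀ t, M ^ t * (S' - S) = (S' - S) * C ^ t := by
    intro t
    induction t with
    | zero => simp
    | succ t ih =>
      rw [pow_succ, pow_succ, Matrix.mul_assoc, hMD, ← Matrix.mul_assoc, ih,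
        Matrix.mul_assoc]
  have hMnil : M ^ (N + 1) = 0 := by
    apply lower_nilp18
    intro x y hxy
    rw [hM, Matrix.sub_apply, Matrix.smul_apply, Matrix.one_apply, smul_eq_mul, hA]
    by_cases h1 : x.1 = y.1
    · by_cases h2 : x.2 = y.2
      · have hxy2 : x = y := Prod.ext h1 h2
        simp [h1, h2, hxy2]
      · have hxy2 : x ≠ y := fun h => h2 (by rw [h])
        simp [h1, h2, hxy2]
    · have hl : ¬ (y.1 < x.1) := by rw [Fin.lt_def]; exact hxy
      have hxy2 : x ≠ y := fun h => h1 (by rw [h])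
      simp [h1, hl, hxy2]
  have hVnil : (C + Complex.I • 1) ^ (N + 1) = 0 := by
    apply upper_nilp18
    intro x y hxy
    rw [hC]
    simp only [Matrix.add_apply, Matrix.sub_apply, Matrix.smul_apply, Matrix.one_apply,
      Matrix.conjTranspose_apply, smul_eq_mul]
    rw [hA]
    by_cases h1 : y.1 = x.1
    · by_cases h2 : y.2 = x.2
      · have hxy2 : x = y := Prod.ext h1.symm h2.symm
        simp [h1, h2, hxy2]
        ring
      · have hxy2 : x ≠ y := fun h => h2 (by rw [h])
        simp [h1, h2, hxy2]
    · have hl : ¬ (x.1 < y.1) := by rw [Fin.lt_def]; exact hxy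
      have hxy2 : x ≠ y := fun h => h1 (by rw [h])
      simp [h1, hl, hxy2]
  have hCunit : IsUnit C := by
    have hnil : IsNilpotent (C + Complex.I • (1 : Matrix (Fin (N+1) × Fin p) (Fin (N+1) × Fin p) ℂ)) :=
      ⟨N + 1, hVnil⟩
    have hu : IsUnit ((-Complex.I) • (1 : Matrix (Fin (N+1) × Fin p) (Fin (N+1) × Fin p) ℂ)) :=
      smul_one_unit18 _ (by simp [Complex.I_ne_zero])
    have hcomm : Commute (C + Complex.I • 1)
        ((-Complex.I) • (1 : Matrix (Fin (N+1) × Fin p) (Fin (N+1) × Fin p) ℂ)) := by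
      unfold Commute SemiconjBy
      rw [Matrix.mul_smul, Matrix.smul_mul, mul_one, one_mul]
    have := hnil.isUnit_add_right_of_commute hu hcomm
    have heq : (C + Complex.I • 1)
        + (-Complex.I) • (1 : Matrix (Fin (N+1) × Fin p) (Fin (N+1) × Fin p) ℂ) = C := by
      rw [add_assoc, ← add_smul, add_neg_cancel, zero_smul, add_zero]
    rwa [heq] at this
  have hzero : (S' - S) * C ^ (N + 1) = 0 := by
    rw [← hpow, hMnil, Matrix.zero_mul]
  have hCu : IsUnit (C ^ (N + 1)) := hCunit.pow _
  have h0 : S' - S = 0 := by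
    have h5 : (S' - S) * (C ^ (N + 1) * (↑(hCu.unit⁻¹) : Matrix _ _ ℂ)) = 0 := by
      rw [← Matrix.mul_assoc, hzero, Matrix.zero_mul]
    rwa [hCu.mul_val_inv, mul_one] at h5
  exact sub_eq_zero.mp h0
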